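/- Let I be a finite index set and X a finite set; for each i ∈ I let S_i ⊆ X. Let C_1, …, C_r ⊆ X be r color classes with integer requirements k_t ≥ 1, and let p_i ∈ [0,1] for i ∈ I. Assume (H1) for every t ∈ {1,…,r}, ∑_{i∈I} p_i · min(|S_i ∩ C_t|, k_t) ≥ 6·k_t, and (H2) for every e ∈ X, ∑_{i : e ∈ S_i} p_i ≤ 1/6. Let N ≥ 1 and, on a probability space, let (X_i^{(ℓ)})_{i∈I, 1≤ℓ≤N} be mutually independent random variables taking values in {0,1} with P(X_i^{(ℓ)} = 1) = p_i. Let Σ = {i ∈ I : X_i^{(ℓ)} = 1 for some ℓ}. Then P(for every t ∈ {1,…,r}, |(⋃_{i∈Σ} S_i) ∩ C_t| ≥ k_t) ≥ 1 − r·(15/16)^N. -/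

import Mathlib

open Finset MeasureTheory ProbabilityTheory

lemma aux_card_biUnion {I α : Type*} [DecidableEq α] [DecidableEq I] (T : I → Finset α)
    (J : Finset I) :
    (∑ i ∈ J, ((T i).card : ℝ)) -
      (1/2) * ∑ i ∈ J, ∑ j ∈ J.erase i, ((T i ∩ T j).card : ℝ)
      ≤ ((J.biUnion T).card : ℝ) := by
  induction J using Finset.induction_on with
  | empty => simp
  | @insert x J hx ih =>
    have hpair : ∑ i ∈ insert x J, ∑ j ∈ (insert x J).erase i, ((T i ∩ T j).card : ℝ)
        = 2 * (∑ j ∈ J, ((T x ∩ T j).card : ℝ))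
          + ∑ i ∈ J, ∑ j ∈ J.erase i, ((T i ∩ T j).card : ℝ) := by
      rw [Finset.sum_insert hx, Finset.erase_insert hx]
      have h2 : ∀ i ∈ J, ∑ j ∈ (insert x J).erase i, ((T i ∩ T j).card : ℝ)
          = ((T i ∩ T x).card : ℝ) + ∑ j ∈ J.erase i, ((T i ∩ T j).card : ℝ) := by
        intro i hi
        have hix : x ≠ i := fun h => hx (h ▸ hi)
        rw [Finset.erase_insert_of_ne hix]
        exact Finset.sum_insert (fun h => hx (Finset.mem_of_mem_erase h))
      rw [Finset.sum_congr rfl h2, Finset.sum_add_distrib]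
      have : ∀ i ∈ J, ((T i ∩ T x).card : ℝ) = ((T x ∩ T i).card : ℝ) := by
        intro i _; rw [Finset.inter_comm]
      rw [Finset.sum_congr rfl this]
      ring
    have hcup : ((((insert x J).biUnion T)).card : ℝ)
        = ((T x).card : ℝ) + (((J.biUnion T)).card : ℝ) - ((T x ∩ J.biUnion T).card : ℝ) := by
      rw [Finset.biUnion_insert]
      have h := Finset.card_union_add_card_inter (T x) (J.biUnion T)
      have h' : ((T x ∪ J.biUnion T).card : ℝ) + ((T x ∩ J.biUnion T).card : ℝ)
          = ((T x).card : ℝ) + ((J.biUnion T).card : ℝ) := by exact_mod_cast h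
      linarith
    have hover : ((T x ∩ J.biUnion T).card : ℝ) ≤ ∑ j ∈ J, ((T x ∩ T j).card : ℝ) := by
      have hsub : T x ∩ J.biUnion T ⊆ J.biUnion (fun j => T x ∩ T j) := by
        intro e he
        simp only [Finset.mem_inter, Finset.mem_biUnion] at he ⊢
        obtain ⟨h1, j, hj, h2⟩ := he
        exact ⟨j, hj, h1, h2⟩
      calc ((T x ∩ J.biUnion T).card : ℝ) ≤ ((J.biUnion (fun j => T x ∩ T j)).card : ℝ) := by
            exact_mod_cast Finset.card_le_card hsub
        _ ≤ ∑ j ∈ J, ((T x ∩ T j).card : ℝ) := by exact_mod_cast Finset.card_biUnion_le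
    rw [Finset.sum_insert hx, hpair, hcup]
    linarith

set_option maxHeartbeats 1000000 in
lemma one_round {Ω : Type*} [MeasurableSpace Ω] (μ : Measure Ω) [IsProbabilityMeasure μ]
    {I : Type*} [Fintype I] {α : Type*} [Fintype α] [DecidableEq α]
    (S : I → Finset α) (Ct : Finset α) (k : ℕ) (hk : 1 ≤ k)
    (p : I → ℝ) (hp01 : ∀ i, p i ∈ Set.Icc (0 : ℝ) 1)
    (hH1 : (6 * k : ℝ) ≤ ∑ i, p i * min ((S i ∩ Ct).card : ℝ) (k : ℝ))
    (hH2 : ∀ e : α, ∑ i ∈ Finset.univ.filter (fun i => e ∈ S i), p i ≤ 1 / 6)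
    (Y : I → Ω → ℕ) (hmeasY : ∀ i, Measurable (Y i))
    (hpair : ∀ i j, i ≠ j → IndepFun (Y i) (Y j) μ)
    (hpY : ∀ i, (μ {ω | Y i ω = 1}).toReal = p i) :
    (μ {ω | ((Finset.univ.biUnion fun i => if Y i ω = 1 then S i else ∅) ∩ Ct).card < k}).toReal
      ≤ 15 / 16 := by
  classical
  choose S' hS'sub hS'card using fun i =>
    Finset.exists_subset_card_eq (min_le_left (S i ∩ Ct).card k)
  have hp0 : ∀ i, 0 ≤ p i := fun i => (hp01 i).1
  set c : I → ℝ := fun i => ((S' i).card : ℝ) with hc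
  have hc_eq : ∀ i, c i = min ((S i ∩ Ct).card : ℝ) (k : ℝ) := by
    intro i; simp only [hc, hS'card, Nat.cast_min]
  have hc0 : ∀ i, 0 ≤ c i := fun i => Nat.cast_nonneg _
  have hck : ∀ i, c i ≤ (k : ℝ) := fun i => by rw [hc_eq i]; exact min_le_right _ _
  set m : ℝ := ∑ i, p i * c i with hm_def
  have hkR : (1 : ℝ) ≤ (k : ℝ) := by exact_mod_cast hk
  have hm6 : 6 * (k : ℝ) ≤ m := by
    refine le_trans hH1 (le_of_eq ?_)
    exact Finset.sum_congr rfl fun i _ => by rw [hc_eq i]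
  have hm_pos : 0 < m := lt_of_lt_of_le (by linarith) hm6
  -- events
  set B : I → Set Ω := fun i => {ω | Y i ω = 1} with hB_def
  have hBmeas : ∀ i, MeasurableSet (B i) := fun i => hmeasY i (measurableSet_singleton 1)
  have hμB : ∀ i, (μ (B i)).toReal = p i := hpY
  have hμBij : ∀ i j, i ≠ j → (μ (B i ∩ B j)).toReal = p i * p j := by
    intro i j hij
    have h := (hpair i j hij).measure_inter_preimage_eq_mul {1} {1}
      (measurableSet_singleton 1) (measurableSet_singleton 1)
    have h2 : μ (B i ∩ B j) = μ (B i) * μ (B j) := h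
    rw [h2, ENNReal.toReal_mul, hμB, hμB]
  set f : I → Ω → ℝ := fun i => (B i).indicator (fun _ => c i) with hf_def
  set T : Ω → ℝ := fun ω => ∑ i, f i ω with hT_def
  set g : I → I → Ω → ℝ :=
    fun i j => ((B i) ∩ (B j)).indicator (fun _ => ((S' i ∩ S' j).card : ℝ)) with hg_def
  set Q : Ω → ℝ := fun ω => ∑ i, ∑ j ∈ Finset.univ.erase i, g i j ω with hQ_def
  have hf_int : ∀ i, Integrable (f i) μ := fun i => (integrable_const (c i)).indicator (hBmeas i)
  have hT_int : Integrable T μ := integrable_finset_sum _ fun i _ => hf_int i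
  have hEf : ∀ i, ∫ ω, f i ω ∂μ = p i * c i := by
    intro i
    rw [hf_def]
    rw [integral_indicator_const (c i) (hBmeas i), smul_eq_mul, measureReal_def, hμB]
  have hET : ∫ ω, T ω ∂μ = m := by
    rw [hT_def, integral_finset_sum _ fun i _ => hf_int i]
    exact Finset.sum_congr rfl fun i _ => hEf i
  have hind_mul : ∀ (s t : Set Ω) (a b : ℝ) (ω : Ω),
      s.indicator (fun _ => a) ω * t.indicator (fun _ => b) ω
        = (s ∩ t).indicator (fun _ => a * b) ω := by
    intro s t a b ω
    by_cases hs : ω ∈ s <;> by_cases ht : ω ∈ t <;>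
      simp [Set.indicator_apply, Set.mem_inter_iff, hs, ht]
  have hTsq : (fun ω => T ω ^ 2)
      = fun ω => ∑ i, ∑ j, ((B i) ∩ (B j)).indicator (fun _ => c i * c j) ω := by
    funext ω
    simp only [hT_def, sq, Finset.sum_mul_sum]
    refine Finset.sum_congr rfl fun i _ => Finset.sum_congr rfl fun j _ => ?_
    simp only [hf_def]
    exact hind_mul _ _ _ _ ω
  have hT2_int : Integrable (fun ω => T ω ^ 2) μ := by
    rw [hTsq]
    exact integrable_finset_sum _ fun i _ => integrable_finset_sum _ fun j _ =>
      (integrable_const _).indicator ((hBmeas i).inter (hBmeas j))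
  have hET2 : ∫ ω, T ω ^ 2 ∂μ
      = ∑ i, ∑ j, (μ (B i ∩ B j)).toReal * (c i * c j) := by
    rw [hTsq, integral_finset_sum _ fun i _ => integrable_finset_sum _ fun j _ =>
      (integrable_const _).indicator ((hBmeas i).inter (hBmeas j))]
    refine Finset.sum_congr rfl fun i _ => ?_
    rw [integral_finset_sum _ fun j _ => (integrable_const _).indicator ((hBmeas i).inter (hBmeas j))]
    exact Finset.sum_congr rfl fun j _ => by
      rw [integral_indicator_const _ ((hBmeas i).inter (hBmeas j)), smul_eq_mul, measureReal_def]
  have hET2' : ∫ ω, T ω ^ 2 ∂μ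
      = ∑ i, p i * c i ^ 2 + ∑ i, ∑ j ∈ Finset.univ.erase i, (p i * c i) * (p j * c j) := by
    rw [hET2, ← Finset.sum_add_distrib]
    refine Finset.sum_congr rfl fun i _ => ?_
    rw [← Finset.add_sum_erase _ _ (Finset.mem_univ i), Set.inter_self, hμB]
    congr 1
    · ring
    · refine Finset.sum_congr rfl fun j hj => ?_
      rw [hμBij i j (Ne.symm (Finset.mem_erase.1 hj).1)]
      ring
  have hmsq : m ^ 2 = ∑ i, (p i * c i) ^ 2
      + ∑ i, ∑ j ∈ Finset.univ.erase i, (p i * c i) * (p j * c j) := by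
    rw [sq, hm_def, Finset.sum_mul_sum, ← Finset.sum_add_distrib]
    refine Finset.sum_congr rfl fun i _ => ?_
    rw [← Finset.add_sum_erase _ _ (Finset.mem_univ i), sq]
  have hD_int : Integrable (fun ω => (T ω - m) ^ 2) μ := by
    have : (fun ω => (T ω - m) ^ 2) = fun ω => T ω ^ 2 - (2 * m) * T ω + m ^ 2 :=
      funext fun ω => by ring
    rw [this]
    exact ((hT2_int.sub (hT_int.const_mul (2 * m))).add (integrable_const _))
  have hED : ∫ ω, (T ω - m) ^ 2 ∂μ ≤ (k : ℝ) * m := by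
    have h1 : ∫ ω, (T ω - m) ^ 2 ∂μ = ∫ ω, (T ω ^ 2 - (2 * m) * T ω + m ^ 2) ∂μ :=
      integral_congr_ae (Filter.Eventually.of_forall fun ω => by ring)
    have hint2 : Integrable (fun ω => 2 * m * T ω) μ := hT_int.const_mul _
    have hint1 : Integrable (fun ω => T ω ^ 2 - 2 * m * T ω) μ := hT2_int.sub hint2
    rw [h1, integral_add hint1 (integrable_const _), integral_sub hT2_int hint2,
      integral_const_mul, integral_const, hET, measureReal_def, measure_univ, ENNReal.toReal_one, one_smul, hET2']
    have h2 : ∑ i, p i * c i ^ 2 ≤ ∑ i, (k : ℝ) * (p i * c i) :=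
      Finset.sum_le_sum fun i _ =>
        calc p i * c i ^ 2 = (p i * c i) * c i := by ring
          _ ≤ (p i * c i) * (k : ℝ) :=
            mul_le_mul_of_nonneg_left (hck i) (mul_nonneg (hp0 i) (hc0 i))
          _ = (k : ℝ) * (p i * c i) := by ring
    have h3 : 0 ≤ ∑ i, (p i * c i) ^ 2 := Finset.sum_nonneg fun i _ => sq_nonneg _
    have h4 : ∑ i, (k : ℝ) * (p i * c i) = (k : ℝ) * m := by rw [hm_def, Finset.mul_sum]
    linarith [hmsq, h2, h3, h4]
  have hG1 : (μ {ω | m ^ 2 / 4 ≤ (T ω - m) ^ 2}).toReal ≤ 2 / 3 := by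
    have hmark := mul_meas_ge_le_integral_of_nonneg
      (Filter.Eventually.of_forall fun ω => sq_nonneg (T ω - m)) hD_int (m ^ 2 / 4)
    have h4 := le_trans hmark hED
    rw [measureReal_def] at h4
    have hm2 : 0 < m ^ 2 := by positivity
    have h5 : (k : ℝ) * m ≤ m ^ 2 / 6 := by nlinarith [mul_le_mul_of_nonneg_right hm6 hm_pos.le]
    nlinarith [ENNReal.toReal_nonneg (a := μ {ω | m ^ 2 / 4 ≤ (T ω - m) ^ 2}), h4, h5, hm2]
  -- second moment of pairs
  have hg_int : ∀ i j, Integrable (g i j) μ := fun i j =>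
    (integrable_const _).indicator ((hBmeas i).inter (hBmeas j))
  have hQ_int : Integrable Q μ := integrable_finset_sum _ fun i _ =>
    integrable_finset_sum _ fun j _ => hg_int i j
  have hQ0 : ∀ ω, 0 ≤ Q ω := fun ω => Finset.sum_nonneg fun i _ =>
    Finset.sum_nonneg fun j _ => Set.indicator_nonneg (fun _ _ => Nat.cast_nonneg _) ω
  have hEQ : ∫ ω, Q ω ∂μ
      = ∑ i, ∑ j ∈ Finset.univ.erase i, (p i * p j) * ((S' i ∩ S' j).card : ℝ) := by
    rw [hQ_def, integral_finset_sum _ fun i _ => integrable_finset_sum _ fun j _ => hg_int i j]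
    refine Finset.sum_congr rfl fun i _ => ?_
    rw [integral_finset_sum _ fun j _ => hg_int i j]
    refine Finset.sum_congr rfl fun j hj => ?_
    rw [hg_def]
    rw [integral_indicator_const _ ((hBmeas i).inter (hBmeas j)), smul_eq_mul, measureReal_def,
      hμBij i j (Ne.symm (Finset.mem_erase.1 hj).1)]
  have hq : (∑ i, ∑ j ∈ Finset.univ.erase i, (p i * p j) * ((S' i ∩ S' j).card : ℝ)) ≤ m / 6 := by
    set F : I → α → ℝ := fun i e => if e ∈ S' i then p i else 0 with hF
    have hF0 : ∀ i e, 0 ≤ F i e := by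
      intro i e
      by_cases h : e ∈ S' i <;> simp [hF, h, hp0 i]
    have step1 : ∀ i j, (p i * p j) * ((S' i ∩ S' j).card : ℝ) = ∑ e, F i e * F j e := by
      intro i j
      have he : ∀ e, F i e * F j e = if e ∈ S' i ∩ S' j then p i * p j else 0 := by
        intro e; by_cases h1 : e ∈ S' i <;> by_cases h2 : e ∈ S' j <;>
          simp [hF, Finset.mem_inter, h1, h2]
      rw [Finset.sum_congr rfl fun e _ => he e, Finset.sum_ite_mem, Finset.univ_inter,
        Finset.sum_const, nsmul_eq_mul, mul_comm]
    have hFsum : ∀ i, ∑ e, F i e = p i * c i := by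
      intro i
      have : ∀ e, F i e = if e ∈ S' i then p i else 0 := fun e => rfl
      rw [Finset.sum_congr rfl fun e _ => this e, Finset.sum_ite_mem, Finset.univ_inter,
        Finset.sum_const, nsmul_eq_mul, mul_comm, hc]
    have hW : ∀ e, ∑ i, F i e ≤ 1 / 6 := by
      intro e
      have h1 : ∑ i, F i e = ∑ i ∈ Finset.univ.filter (fun i => e ∈ S' i), p i :=
        (Finset.sum_filter _ _).symm
      rw [h1]
      refine le_trans (Finset.sum_le_sum_of_subset_of_nonneg ?_ fun i _ _ => hp0 i) (hH2 e)
      intro i hi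
      simp only [Finset.mem_filter, Finset.mem_univ, true_and] at hi ⊢
      exact (Finset.mem_inter.1 (hS'sub i hi)).1
    have hW0 : ∀ e, 0 ≤ ∑ i, F i e := fun e => Finset.sum_nonneg fun i _ => hF0 i e
    calc (∑ i, ∑ j ∈ Finset.univ.erase i, (p i * p j) * ((S' i ∩ S' j).card : ℝ))
        ≤ ∑ i, ∑ j, (p i * p j) * ((S' i ∩ S' j).card : ℝ) := by
          refine Finset.sum_le_sum fun i _ => ?_
          refine Finset.sum_le_sum_of_subset_of_nonneg (Finset.subset_univ _) fun j _ _ => ?_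
          rw [step1]
          exact Finset.sum_nonneg fun e _ => mul_nonneg (hF0 i e) (hF0 j e)
      _ = ∑ e, (∑ i, F i e) * (∑ j, F j e) := by
          rw [Finset.sum_congr rfl fun i (_ : i ∈ Finset.univ) =>
            Finset.sum_congr rfl fun j (_ : j ∈ Finset.univ) => step1 i j]
          rw [Finset.sum_congr rfl fun i (_ : i ∈ Finset.univ) =>
            (Finset.sum_comm (s := Finset.univ) (t := Finset.univ)
              (f := fun j e => F i e * F j e))]
          rw [Finset.sum_comm]
          refine Finset.sum_congr rfl fun e _ => ?_
          exact (Finset.sum_mul_sum _ _ _ _).symm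
      _ ≤ ∑ e, (1/6) * (∑ j, F j e) := Finset.sum_le_sum fun e _ =>
          mul_le_mul_of_nonneg_right (hW e) (hW0 e)
      _ = (1/6) * ∑ e, ∑ j, F j e := by rw [Finset.mul_sum]
      _ = m / 6 := by
          rw [Finset.sum_comm]
          rw [Finset.sum_congr rfl fun j (_ : j ∈ Finset.univ) => hFsum j]
          rw [← hm_def]; ring
  have hG2 : (μ {ω | 2 * m / 3 ≤ Q ω}).toReal ≤ 1 / 4 := by
    have hmark := mul_meas_ge_le_integral_of_nonneg (Filter.Eventually.of_forall hQ0)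
      hQ_int (2 * m / 3)
    rw [hEQ] at hmark
    have h5 := le_trans hmark hq
    rw [measureReal_def] at h5
    nlinarith [ENNReal.toReal_nonneg (a := μ {ω | 2 * m / 3 ≤ Q ω}), hm_pos]
  -- pointwise bound
  have hpoint : ∀ ω, T ω - (1/2) * Q ω ≤
      (((Finset.univ.biUnion fun i => if Y i ω = 1 then S i else ∅) ∩ Ct).card : ℝ) := by
    intro ω
    set J : Finset I := Finset.univ.filter (fun i => Y i ω = 1) with hJ
    have hmemJ : ∀ i, i ∈ J ↔ Y i ω = 1 := by
      intro i; rw [hJ]; simp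
    have hTω : T ω = ∑ i ∈ J, c i := by
      rw [hT_def]
      dsimp only
      rw [hJ, Finset.sum_filter]
      refine Finset.sum_congr rfl fun i _ => ?_
      by_cases h : Y i ω = 1 <;>
        simp [hf_def, Set.indicator_apply, hB_def, Set.mem_setOf_eq, h]
    have hQω : Q ω = ∑ i ∈ J, ∑ j ∈ J.erase i, ((S' i ∩ S' j).card : ℝ) := by
      have h1 : ∀ i, (∑ j ∈ Finset.univ.erase i, g i j ω)
          = if Y i ω = 1 then
              ∑ j ∈ Finset.univ.erase i, (if Y j ω = 1 then ((S' i ∩ S' j).card : ℝ) else 0)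
            else 0 := by
        intro i
        by_cases h : Y i ω = 1
        · rw [if_pos h]
          refine Finset.sum_congr rfl fun j _ => ?_
          by_cases h2 : Y j ω = 1 <;>
            simp [hg_def, Set.indicator_apply, hB_def, Set.mem_inter_iff, Set.mem_setOf_eq, h, h2]
        · rw [if_neg h]
          refine Finset.sum_eq_zero fun j _ => ?_
          simp [hg_def, Set.indicator_apply, hB_def, Set.mem_inter_iff, Set.mem_setOf_eq, h]
      rw [hQ_def]
      dsimp only
      rw [Finset.sum_congr rfl fun i _ => h1 i, ← Finset.sum_filter, ← hJ]
      refine Finset.sum_congr rfl fun i _ => ?_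
      rw [← Finset.sum_filter]
      congr 1
      ext j
      simp only [hJ, Finset.mem_erase, Finset.mem_filter, Finset.mem_univ, true_and]
      tauto
    have hcomb := aux_card_biUnion S' J
    have hsub2 : J.biUnion S' ⊆ (Finset.univ.biUnion fun i => if Y i ω = 1 then S i else ∅) ∩ Ct := by
      intro e he
      rw [Finset.mem_biUnion] at he
      obtain ⟨i, hiJ, hei⟩ := he
      have hi1 : Y i ω = 1 := (hmemJ i).1 hiJ
      have heS := Finset.mem_inter.1 (hS'sub i hei)
      refine Finset.mem_inter.2 ⟨Finset.mem_biUnion.2 ⟨i, Finset.mem_univ i, ?_⟩, heS.2⟩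
      rw [if_pos hi1]; exact heS.1
    have hcard : ((J.biUnion S').card : ℝ)
        ≤ (((Finset.univ.biUnion fun i => if Y i ω = 1 then S i else ∅) ∩ Ct).card : ℝ) := by
      exact_mod_cast Finset.card_le_card hsub2
    rw [hTω, hQω]
    exact le_trans hcomb hcard
  -- conclusion
  have hsubF : {ω | ((Finset.univ.biUnion fun i => if Y i ω = 1 then S i else ∅) ∩ Ct).card < k}
      ⊆ {ω | m ^ 2 / 4 ≤ (T ω - m) ^ 2} ∪ {ω | 2 * m / 3 ≤ Q ω} := by
    intro ω hω
    simp only [Set.mem_setOf_eq] at hω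
    by_contra hcon
    simp only [Set.mem_union, Set.mem_setOf_eq, not_or, not_le] at hcon
    obtain ⟨h1, h2⟩ := hcon
    have hT_big : m / 2 < T ω := by
      by_contra hle
      push_neg at hle
      have h6 : m / 2 ≤ m - T ω := by linarith
      have h7 : (m / 2) ^ 2 ≤ (m - T ω) ^ 2 := by
        apply pow_le_pow_left₀ (by linarith) h6
      have h8 : (m - T ω) ^ 2 = (T ω - m) ^ 2 := by ring
      have h9 : (m / 2) ^ 2 = m ^ 2 / 4 := by ring
      linarith
    have hZ := hpoint ω
    have hZk : ((((Finset.univ.biUnion fun i => if Y i ω = 1 then S i else ∅) ∩ Ct).card : ℝ))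
        < (k : ℝ) := by exact_mod_cast hω
    linarith [hm6]
  calc (μ {ω | ((Finset.univ.biUnion fun i => if Y i ω = 1 then S i else ∅) ∩ Ct).card < k}).toReal
      ≤ (μ ({ω | m ^ 2 / 4 ≤ (T ω - m) ^ 2} ∪ {ω | 2 * m / 3 ≤ Q ω})).toReal :=
        ENNReal.toReal_mono (measure_ne_top μ _) (measure_mono hsubF)
    _ ≤ (μ {ω | m ^ 2 / 4 ≤ (T ω - m) ^ 2} + μ {ω | 2 * m / 3 ≤ Q ω}).toReal :=
        ENNReal.toReal_mono
          (ENNReal.add_ne_top.2 ⟨measure_ne_top μ _, measure_ne_top μ _⟩)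
          (measure_union_le _ _)
    _ = (μ {ω | m ^ 2 / 4 ≤ (T ω - m) ^ 2}).toReal + (μ {ω | 2 * m / 3 ≤ Q ω}).toReal :=
        ENNReal.toReal_add (measure_ne_top μ _) (measure_ne_top μ _)
    _ ≤ 2 / 3 + 1 / 4 := add_le_add hG1 hG2
    _ ≤ 15 / 16 := by norm_num


set_option maxHeartbeats 1000000 in
/-- `N` independent rounding iterations: in each iteration `ℓ`, each index `i` is picked
independently with probability `p i`; `Σ` is the set of indices picked in some iteration.
Under the strengthened LP constraints (H1) and the lightness condition (H2), with
probability at least `1 - r (15/16)^N`, the union of the selected sets meets the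
coverage requirement `k t` of every color class `C t`. -/
theorem stmt5 {Ω : Type*} [MeasurableSpace Ω] (μ : Measure Ω) [IsProbabilityMeasure μ]
    {I : Type*} [Fintype I] {α : Type*} [Fintype α] [DecidableEq α]
    (S : I → Finset α) (r : ℕ) (C : Fin r → Finset α)
    (k : Fin r → ℕ) (hk : ∀ t, 1 ≤ k t)
    (p : I → ℝ) (hp01 : ∀ i, p i ∈ Set.Icc (0 : ℝ) 1)
    (hH1 : ∀ t, (6 * k t : ℝ) ≤ ∑ i, p i * min ((S i ∩ C t).card : ℝ) (k t : ℝ))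
    (hH2 : ∀ e : α, ∑ i ∈ Finset.univ.filter (fun i => e ∈ S i), p i ≤ 1 / 6)
    (N : ℕ) (hN : 1 ≤ N)
    (X : I × Fin N → Ω → ℕ) (hmeas : ∀ iℓ, Measurable (X iℓ))
    (h01 : ∀ iℓ ω, X iℓ ω = 0 ∨ X iℓ ω = 1)
    (hind : iIndepFun X μ)
    (hp : ∀ iℓ, (μ {ω | X iℓ ω = 1}).toReal = p iℓ.1)
    (U : Ω → Finset α)
    (hU : ∀ ω, U ω = Finset.univ.biUnion fun i =>
      if ∃ ℓ : Fin N, X (i, ℓ) ω = 1 then S i else ∅) :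
    (1 : ℝ) - r * (15 / 16 : ℝ) ^ N ≤
      (μ {ω | ∀ t, k t ≤ ((U ω) ∩ C t).card}).toReal := by
  classical
  set Bad : Fin r → Fin N → Set Ω := fun t ℓ =>
    {ω | ((Finset.univ.biUnion fun i => if X (i, ℓ) ω = 1 then S i else ∅) ∩ C t).card < k t}
    with hBad_def
  have hone : ∀ t ℓ, (μ (Bad t ℓ)).toReal ≤ 15 / 16 := by
    intro t ℓ
    exact one_round μ S (C t) (k t) (hk t) p hp01 (hH1 t) hH2 (fun i => X (i, ℓ))
      (fun i => hmeas (i, ℓ))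
      (fun i j hij => hind.indepFun (by simpa using hij))
      (fun i => hp (i, ℓ))
  have hprod : ∀ (t : Fin r) (F : Finset (Fin N)),
      μ (⋂ ℓ ∈ F, Bad t ℓ) = ∏ ℓ ∈ F, μ (Bad t ℓ) := by
    intro t F
    induction F using Finset.induction_on with
    | empty => simp
    | @insert x F hx ih =>
      rw [Finset.prod_insert hx, ← ih, Finset.set_biInter_insert]
      set A : Finset (I × Fin N) := Finset.univ ×ˢ {x} with hA
      set Bf : Finset (I × Fin N) := Finset.univ ×ˢ F with hBf
      have hdisj : Disjoint A Bf := by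
        rw [Finset.disjoint_left]
        rintro ⟨i, ℓ⟩ hiA hiB
        simp only [hA, hBf, Finset.mem_product, Finset.mem_univ, true_and,
          Finset.mem_singleton] at hiA hiB
        exact hx (hiA ▸ hiB)
      have hIF := hind.indepFun_finset A Bf hdisj hmeas
      have hmemA : ∀ i : I, (i, x) ∈ A := by
        intro i; simp [hA, Finset.mem_product]
      have hmemB : ∀ (i : I) (ℓ : Fin N), ℓ ∈ F → (i, ℓ) ∈ Bf := by
        intro i ℓ hℓ; simp [hBf, Finset.mem_product, hℓ]
      set M1 : Set ((j : A) → ℕ) := {v | ((Finset.univ.biUnion fun i =>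
        if v ⟨(i, x), hmemA i⟩ = 1 then S i else ∅) ∩ C t).card < k t} with hM1
      set M2 : Set ((j : Bf) → ℕ) := {v | ∀ ℓ (hℓ : ℓ ∈ F),
        ((Finset.univ.biUnion fun i =>
          if v ⟨(i, ℓ), hmemB i ℓ hℓ⟩ = 1 then S i else ∅) ∩ C t).card < k t} with hM2
      have hM1meas : MeasurableSet M1 := .of_discrete
      have hM2meas : MeasurableSet M2 := .of_discrete
      have hmul := hIF.measure_inter_preimage_eq_mul M1 M2 hM1meas hM2meas
      have hpre1 : (fun ω (j : A) => X j ω) ⁻¹' M1 = Bad t x := rfl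
      have hpre2 : (fun ω (j : Bf) => X j ω) ⁻¹' M2 = ⋂ ℓ ∈ F, Bad t ℓ := by
        ext ω
        simp only [Set.mem_preimage, hM2, Set.mem_setOf_eq, Set.mem_iInter, hBad_def]
      rw [hpre1, hpre2] at hmul
      exact hmul
  have hcap : ∀ t, μ (⋂ ℓ, Bad t ℓ) ≤ ENNReal.ofReal (15 / 16) ^ N := by
    intro t
    have h1 : (⋂ ℓ, Bad t ℓ) = ⋂ ℓ ∈ (Finset.univ : Finset (Fin N)), Bad t ℓ := by simp
    rw [h1, hprod t Finset.univ]
    calc ∏ ℓ ∈ (Finset.univ : Finset (Fin N)), μ (Bad t ℓ)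
        ≤ ∏ _ℓ ∈ (Finset.univ : Finset (Fin N)), ENNReal.ofReal (15 / 16) := by
          refine Finset.prod_le_prod' fun ℓ _ => ?_
          rw [← ENNReal.ofReal_toReal (measure_ne_top μ (Bad t ℓ))]
          exact ENNReal.ofReal_le_ofReal (hone t ℓ)
      _ = ENNReal.ofReal (15 / 16) ^ N := by
          rw [Finset.prod_const, Finset.card_univ, Fintype.card_fin]
  set Good : Set Ω := {ω | ∀ t, k t ≤ ((U ω) ∩ C t).card} with hGood
  have hGmeas : MeasurableSet Good := by
    have hV : Measurable (fun ω (j : I × Fin N) => X j ω) :=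
      measurable_pi_lambda _ fun j => hmeas j
    have hset : Good = (fun ω (j : I × Fin N) => X j ω) ⁻¹'
        {v : I × Fin N → ℕ | ∀ t, k t ≤ (((Finset.univ.biUnion fun i =>
          if ∃ ℓ, v (i, ℓ) = 1 then S i else ∅)) ∩ C t).card} := by
      ext ω
      simp only [hGood, Set.mem_setOf_eq, Set.mem_preimage]
      constructor
      · intro h t
        have := h t
        rwa [hU ω] at this
      · intro h t
        rw [hU ω]
        exact h t
    rw [hset]
    exact hV .of_discrete
  have hcompl : Goodᶜ ⊆ ⋃ t, ⋂ ℓ, Bad t ℓ := by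
    intro ω hω
    simp only [hGood, Set.mem_compl_iff, Set.mem_setOf_eq, not_forall, not_le] at hω
    obtain ⟨t, ht⟩ := hω
    refine Set.mem_iUnion.2 ⟨t, Set.mem_iInter.2 fun ℓ => ?_⟩
    simp only [hBad_def, Set.mem_setOf_eq]
    have hsub : (Finset.univ.biUnion fun i => if X (i, ℓ) ω = 1 then S i else ∅) ∩ C t
        ⊆ U ω ∩ C t := by
      refine Finset.inter_subset_inter ?_ (le_refl _)
      rw [hU ω]
      intro e he
      rw [Finset.mem_biUnion] at he
      obtain ⟨i, _, hei⟩ := he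
      by_cases h : X (i, ℓ) ω = 1
      · rw [if_pos h] at hei
        exact Finset.mem_biUnion.2 ⟨i, Finset.mem_univ i, by rw [if_pos ⟨ℓ, h⟩]; exact hei⟩
      · rw [if_neg h] at hei
        exact absurd hei (Finset.notMem_empty e)
    exact lt_of_le_of_lt (Finset.card_le_card hsub) ht
  have hbadmeasure : μ Goodᶜ ≤ (r : ENNReal) * ENNReal.ofReal (15 / 16) ^ N := by
    calc μ Goodᶜ ≤ μ (⋃ t, ⋂ ℓ, Bad t ℓ) := measure_mono hcompl
      _ ≤ ∑' t, μ (⋂ ℓ, Bad t ℓ) := measure_iUnion_le _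
      _ = ∑ t, μ (⋂ ℓ, Bad t ℓ) := tsum_fintype _
      _ ≤ ∑ _t : Fin r, ENNReal.ofReal (15 / 16) ^ N := Finset.sum_le_sum fun t _ => hcap t
      _ = (r : ENNReal) * ENNReal.ofReal (15 / 16) ^ N := by
          rw [Finset.sum_const, Finset.card_univ, Fintype.card_fin, nsmul_eq_mul]
  have hfin : ((r : ENNReal) * ENNReal.ofReal (15 / 16) ^ N) ≠ ⊤ :=
    ENNReal.mul_ne_top (ENNReal.natCast_ne_top r) (ENNReal.pow_ne_top ENNReal.ofReal_ne_top)
  have hbadR : (μ Goodᶜ).toReal ≤ r * (15 / 16 : ℝ) ^ N := by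
    have h2 := ENNReal.toReal_mono hfin hbadmeasure
    rw [ENNReal.toReal_mul, ENNReal.toReal_pow, ENNReal.toReal_natCast,
      ENNReal.toReal_ofReal (by norm_num)] at h2
    exact h2
  have hsum : (μ Good).toReal + (μ Goodᶜ).toReal = 1 := by
    have h := measure_add_measure_compl (μ := μ) hGmeas
    rw [measure_univ] at h
    have h3 := congrArg ENNReal.toReal h
    rwa [ENNReal.toReal_add (measure_ne_top μ _) (measure_ne_top μ _),
      ENNReal.toReal_one] at h3
  linarith [hbadR, hsum]
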